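/- If G is a connected graph having no clique separator, then every proper m-convex set of G is a clique. -/

import Mathlib

/-- A walk is an induced path if it is a path and no two non-consecutive
vertices on it are adjacent (i.e., it has no chord). -/
def IsInducedPath {V : Type*} (G : SimpleGraph V) {u v : V} (p : G.Walk u v) : Prop :=
  p.IsPath ∧ ∀ (i j : ℕ) (hi : i < p.support.length) (hj : j < p.support.length),
    i + 1 < j → ¬ G.Adj p.support[i] p.support[j]

/-- `M` is monophonically convex if every induced path with both endpoints in `M`
lies entirely in `M`. -/
def mConvex {V : Type*} (G : SimpleGraph V) (M : Set V) : Prop :=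
  ∀ ⦃u v : V⦄ (p : G.Walk u v), IsInducedPath G p → u ∈ M → v ∈ M →
    ∀ x ∈ p.support, x ∈ M

namespace SimpleGraph.Walk

open SimpleGraph Walk

variable {V : Type*} {G : SimpleGraph V}

lemma support_getElem_eq_getVert' {u v : V} (p : G.Walk u v) {i : ℕ}
    (hi : i < p.support.length) : p.support[i] = p.getVert i := by
  induction p generalizing i with
  | nil =>
    simp only [Walk.support_nil, List.length_singleton] at hi
    interval_cases i <;> simp
  | cons h q ih =>
    cases i with
    | zero => simp
    | succ n =>
      simp only [Walk.support_cons, List.length_cons] at hi ⊢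
      rw [List.getElem_cons_succ, ih (by omega), Walk.getVert_cons_succ]

/-- take the first `n` darts of a walk -/
def take' {u v : V} : (p : G.Walk u v) → (n : ℕ) → G.Walk u (p.getVert n)
  | p, 0 => Walk.nil.copy rfl (p.getVert_zero).symm
  | Walk.nil, _ + 1 => Walk.nil
  | Walk.cons h q, n + 1 =>
      (Walk.cons h (take' q n)).copy rfl (Walk.getVert_cons_succ q h).symm

lemma length_take' {u v : V} (p : G.Walk u v) (n : ℕ) :
    (p.take' n).length = min n p.length := by
  induction p generalizing n with
  | nil => cases n <;> simp [take']
  | cons h q ih =>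
    cases n with
    | zero => simp [take']
    | succ m => simp [take', ih]

lemma support_take'_subset {u v : V} (p : G.Walk u v) (n : ℕ) :
    ∀ x ∈ (p.take' n).support, x ∈ p.support := by
  induction p generalizing n with
  | nil => cases n <;> simp [take']
  | cons h q ih =>
    cases n with
    | zero => simp [take']
    | succ m =>
      intro x hx
      simp only [take', Walk.support_copy, Walk.support_cons, List.mem_cons] at hx ⊢
      rcases hx with h1 | h2
      · exact Or.inl h1
      · exact Or.inr (ih m x h2)

lemma getVert_nil'' {u : V} (n : ℕ) : (Walk.nil : G.Walk u u).getVert n = u :=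
  Walk.getVert_of_length_le _ (by simp)

/-- drop the first `n` darts of a walk -/
def drop'' {u v : V} : (p : G.Walk u v) → (n : ℕ) → G.Walk (p.getVert n) v
  | p, 0 => p.copy (p.getVert_zero).symm rfl
  | Walk.nil, _ + 1 => Walk.nil.copy (Walk.getVert_of_length_le _ (by simp)).symm rfl
  | Walk.cons h q, n + 1 => (drop'' q n).copy (Walk.getVert_cons_succ q h).symm rfl

lemma length_drop'' {u v : V} (p : G.Walk u v) (n : ℕ) :
    (p.drop'' n).length = p.length - n := by
  induction p generalizing n with
  | nil => cases n <;> simp [drop'', getVert_nil'']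
  | cons h q ih =>
    cases n with
    | zero => simp [drop'']
    | succ m => simp [drop'', ih]

lemma support_drop''_subset {u v : V} (p : G.Walk u v) (n : ℕ) :
    ∀ x ∈ (p.drop'' n).support, x ∈ p.support := by
  induction p generalizing n with
  | nil => cases n <;> simp [drop'', getVert_nil'']
  | cons h q ih =>
    cases n with
    | zero => simp [drop'']
    | succ m =>
      intro x hx
      simp only [drop'', Walk.support_copy] at hx
      simp only [Walk.support_cons, List.mem_cons]
      exact Or.inr (ih m x hx)

lemma exists_shorter_of_chord {u v : V} (p : G.Walk u v) {i j : ℕ} (hij : i + 1 < j)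
    (hj : j ≤ p.length) (hadj : G.Adj (p.getVert i) (p.getVert j)) :
    ∃ q : G.Walk u v, q.length < p.length ∧ ∀ x ∈ q.support, x ∈ p.support := by
  refine ⟨(p.take' i).append (Walk.cons hadj (p.drop'' j)), ?_, ?_⟩
  · rw [Walk.length_append, Walk.length_cons, length_take', length_drop'']
    omega
  · intro x hx
    rw [Walk.mem_support_append_iff] at hx
    rcases hx with hx | hx
    · exact support_take'_subset p i x hx
    · rw [Walk.support_cons, List.mem_cons] at hx
      rcases hx with rfl | hx
      · exact Walk.mem_support_iff_exists_getVert.2 ⟨i, rfl, by omega⟩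
      · exact support_drop''_subset p j x hx

lemma exists_isInducedPath {x y : V} {S : Set V}
    (h : ∃ p : G.Walk x y, ∀ v ∈ p.support, v ∈ S) :
    ∃ p : G.Walk x y, IsInducedPath G p ∧ ∀ v ∈ p.support, v ∈ S := by
  classical
  have hP : ∃ n, ∃ p : G.Walk x y, p.length = n ∧ ∀ v ∈ p.support, v ∈ S := by
    obtain ⟨p, hp⟩ := h
    exact ⟨p.length, p, rfl, hp⟩
  obtain ⟨p, hlen, hsup⟩ := Nat.find_spec hP
  have hqS : ∀ v ∈ p.bypass.support, v ∈ S := fun v hv => hsup v (p.support_bypass_subset hv)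
  have hqlen : p.bypass.length = Nat.find hP :=
    le_antisymm (hlen ▸ p.length_bypass_le) (Nat.find_min' hP ⟨p.bypass, rfl, hqS⟩)
  refine ⟨p.bypass, ⟨p.bypass_isPath, ?_⟩, hqS⟩
  intro i j hi hj hij hadj
  rw [support_getElem_eq_getVert' _ hi, support_getElem_eq_getVert' _ hj] at hadj
  rw [Walk.length_support] at hi hj
  obtain ⟨q, hqlt, hqsub⟩ := exists_shorter_of_chord p.bypass hij (by omega) hadj
  have : Nat.find hP ≤ q.length :=
    Nat.find_min' hP ⟨q, rfl, fun v hv => hqS v (hqsub v hv)⟩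
  omega

lemma exists_boundary {K : Set V} :
    ∀ {a m : V} (W : G.Walk a m), a ∈ K → m ∉ K →
      ∃ k w, k ∈ K ∧ w ∉ K ∧ G.Adj k w ∧ w ∈ W.support := by
  intro a m W
  induction W with
  | nil => intro ha hm; exact absurd ha hm
  | @cons a b m h q ih =>
    intro ha hm
    by_cases hb : b ∈ K
    · obtain ⟨k, w, h1, h2, h3, h4⟩ := ih hb hm
      exact ⟨k, w, h1, h2, h3, by simp [h4]⟩
    · exact ⟨a, b, ha, hb, h, by simp⟩

end SimpleGraph.Walk

open SimpleGraph Walk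

theorem stmt_17 {V : Type*} [Fintype V] (G : SimpleGraph V) (hG : G.Connected)
    (hnosep : ¬ ∃ C : Set V, G.IsClique C ∧ ¬ (G.induce (Cᶜ : Set V)).Preconnected) :
    ∀ M : Set V, mConvex G M → M ≠ Set.univ → G.IsClique M := by
  classical
  intro M hM hMne
  by_contra hclique
  rw [SimpleGraph.isClique_iff, Set.Pairwise] at hclique
  push_neg at hclique
  obtain ⟨u, hu, v, hv, huv, hadj_uv⟩ := hclique
  have hex : ∃ a, a ∉ M := by
    by_contra h; push_neg at h; exact hMne (Set.eq_univ_of_forall h)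
  obtain ⟨a, haM⟩ := hex
  have haMc : a ∈ (Mᶜ : Set V) := haM
  set K : Set V :=
    {w | ∃ hw : w ∈ (Mᶜ : Set V), (G.induce (Mᶜ : Set V)).Reachable ⟨a, haMc⟩ ⟨w, hw⟩} with hKdef
  have haK : a ∈ K := ⟨haMc, SimpleGraph.Reachable.refl _⟩
  have hKM : ∀ k ∈ K, k ∉ M := fun k hk => hk.1
  have hKext : ∀ k ∈ K, ∀ w, G.Adj k w → w ∉ M → w ∈ K := by
    rintro k ⟨hk, hr⟩ w hadj hw
    refine ⟨hw, hr.trans (SimpleGraph.Adj.reachable ?_)⟩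
    simp only [SimpleGraph.comap_adj, Function.Embedding.coe_subtype]
    exact hadj
  set A : Set V := {m | m ∈ M ∧ ∃ k ∈ K, G.Adj m k} with hAdef
  have hAM : A ⊆ M := fun m hm => hm.1
  have hKwalk : ∀ k1, k1 ∈ K → ∀ k2, k2 ∈ K →
      ∃ W : G.Walk k1 k2, ∀ z ∈ W.support, z ∈ K := by
    rintro k1 ⟨h1, hr1⟩ k2 ⟨h2, hr2⟩
    obtain ⟨W⟩ := hr1.symm.trans hr2
    let hom : G.induce (Mᶜ : Set V) →g G :=
      ⟨Subtype.val, fun {p q} h => by simpa using h⟩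
    refine ⟨W.map hom, ?_⟩
    intro z hz
    rw [Walk.support_map, List.mem_map] at hz
    obtain ⟨x, hx, rfl⟩ := hz
    refine ⟨x.2, ?_⟩
    have : (⟨(hom x : V), x.2⟩ : (Mᶜ : Set V)) = x := Subtype.coe_eta _ _
    rw [this]
    exact hr1.trans ⟨W.takeUntil x hx⟩
  -- Step 1: A contains two distinct nonadjacent vertices
  have hA : ∃ x, x ∈ A ∧ ∃ y, y ∈ A ∧ x ≠ y ∧ ¬ G.Adj x y := by
    by_cases hMA : ∀ m ∈ M, m ∈ A
    · exact ⟨u, hMA u hu, v, hMA v hv, huv, hadj_uv⟩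
    · push_neg at hMA
      obtain ⟨m, hmM, hmA⟩ := hMA
      by_contra hAcl
      push_neg at hAcl
      apply hnosep
      refine ⟨A, fun x hx y hy hxy => hAcl x hx y hy hxy, ?_⟩
      intro hpre
      have haA : a ∈ (Aᶜ : Set V) := fun h => haM (hAM h)
      have hmAc : m ∈ (Aᶜ : Set V) := hmA
      obtain ⟨W⟩ := hpre ⟨a, haA⟩ ⟨m, hmAc⟩
      let hom : G.induce (Aᶜ : Set V) →g G :=
        ⟨Subtype.val, fun {p q} h => by simpa using h⟩
      have hWsup : ∀ z ∈ (W.map hom).support, z ∈ (Aᶜ : Set V) := by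
        intro z hz
        rw [Walk.support_map, List.mem_map] at hz
        obtain ⟨x, hx, rfl⟩ := hz
        exact x.2
      have hmK : m ∉ K := fun h => hKM m h hmM
      obtain ⟨k, w, hkK, hwK, hkw, hwsup⟩ := exists_boundary (W.map hom) haK hmK
      have hwA : w ∉ A := hWsup w hwsup
      by_cases hwM : w ∈ M
      · exact hwA ⟨hwM, k, hkK, hkw.symm⟩
      · exact hwK (hKext k hkK w hkw hwM)
  obtain ⟨x, hxA, y, hyA, hxy, hnadj⟩ := hA
  obtain ⟨hxM, kx, hkx, hxkx⟩ := hxA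
  obtain ⟨hyM, ky, hky, hyky⟩ := hyA
  obtain ⟨W, hW⟩ := hKwalk kx hkx ky hky
  set S : Set V := insert x (insert y K) with hSdef
  have hexists : ∃ p : G.Walk x y, ∀ z ∈ p.support, z ∈ S := by
    refine ⟨Walk.cons hxkx (W.append (Walk.cons hyky.symm Walk.nil)), ?_⟩
    intro z hz
    rw [Walk.support_cons, List.mem_cons, Walk.mem_support_append_iff] at hz
    rcases hz with rfl | hz | hz
    · exact Set.mem_insert _ _
    · exact Set.mem_insert_of_mem _ (Set.mem_insert_of_mem _ (hW z hz))
    · rw [Walk.support_cons, List.mem_cons, Walk.support_nil, List.mem_singleton] at hz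
      rcases hz with rfl | rfl
      · exact Set.mem_insert_of_mem _ (Set.mem_insert_of_mem _ hky)
      · exact Set.mem_insert_of_mem _ (Set.mem_insert _ _)
  obtain ⟨q, hqind, hqS⟩ := exists_isInducedPath hexists
  have hall : ∀ z ∈ q.support, z ∈ M := hM q hqind hxM hyM
  have h0 : q.length ≠ 0 := by
    intro h
    exact hxy (by rw [← q.getVert_zero, ← h, q.getVert_length])
  have h1 : q.length ≠ 1 := by
    intro h
    apply hnadj
    have := q.adj_getVert_succ (i := 0) (by omega)
    rwa [q.getVert_zero, show (0 + 1 : ℕ) = q.length from by omega, q.getVert_length] at this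
  have hlen2 : 2 ≤ q.length := by omega
  have hnodup : q.support.Nodup := hqind.1.support_nodup
  have hc : q.getVert 1 ∈ q.support :=
    Walk.mem_support_iff_exists_getVert.2 ⟨1, rfl, by omega⟩
  have hcM : q.getVert 1 ∈ M := hall _ hc
  have hcS : q.getVert 1 ∈ S := hqS _ hc
  have hsl : q.support.length = q.length + 1 := q.length_support
  have hcx : q.getVert 1 ≠ x := by
    intro h
    have e0 : q.support[0]'(by omega) = x := by
      rw [support_getElem_eq_getVert' _ (by omega), q.getVert_zero]
    have e1 : q.support[1]'(by omega) = x := by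
      rw [support_getElem_eq_getVert' _ (by omega)]; exact h
    have := (hnodup.getElem_inj_iff).1 (e1.trans e0.symm)
    omega
  have hcy : q.getVert 1 ≠ y := by
    intro h
    have e0 : q.support[q.length]'(by omega) = y := by
      rw [support_getElem_eq_getVert' _ (by omega), q.getVert_length]
    have e1 : q.support[1]'(by omega) = y := by
      rw [support_getElem_eq_getVert' _ (by omega)]; exact h
    have := (hnodup.getElem_inj_iff).1 (e1.trans e0.symm)
    omega
  have hcK : q.getVert 1 ∈ K := by
    rcases hcS with h | h | h
    · exact absurd h hcx
    · exact absurd h hcy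
    · exact h
  exact hKM _ hcK hcM
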